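/- Let Ω, ∂Ω, σ, n, q be as in the context, and assume in addition that Ω is contained in the closed ball of radius R > 0 centered at the origin. Let φ, ψ : ℝ^d → ℝ be C² on a neighborhood of the closure of Ω, satisfying −Δφ = E_φ·φ and −Δψ = E_ψ·ψ on Ω, with ∫_Ω φ(x)² dx = 1, ∫_Ω ψ(x)² dx = 1 and ∫_Ω φ(x)·ψ(x) dx = 0. Assume both φ and ψ satisfy the mixed homogeneous boundary conditions: there are a subset Γ_D ⊆ ∂Ω and a function γ : ∂Ω → ℝ such that φ and ψ vanish on Γ_D and γ(x)·φ(x) + ⟨n(x),∇φ(x)⟩ = 0 and γ(x)·ψ(x) + ⟨n(x),∇ψ(x)⟩ = 0 for all x ∈ ∂Ω ∖ Γ_D. Then |q(φ,ψ; E_φ+E_ψ)| ≤ (R²/4)·(E_φ − E_ψ)². -/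

import Mathlib

open MeasureTheory
open scoped RealInnerProductSpace Classical

noncomputable section

/-- The Euclidean Laplacian: the sum of the second partial derivatives. -/
def lap {d : ℕ} (u : EuclideanSpace ℝ (Fin d) → ℝ) (x : EuclideanSpace ℝ (Fin d)) : ℝ :=
  ∑ i, fderiv ℝ (fun y => fderiv ℝ u y (EuclideanSpace.single i (1:ℝ))) x
    (EuclideanSpace.single i (1:ℝ))

/-- The divergence: the sum of the partial derivatives of the components. -/
def divg {d : ℕ} (F : EuclideanSpace ℝ (Fin d) → EuclideanSpace ℝ (Fin d))
    (x : EuclideanSpace ℝ (Fin d)) : ℝ :=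
  ∑ i, fderiv ℝ (fun y => ⟪F y, EuclideanSpace.single i (1:ℝ)⟫) x
    (EuclideanSpace.single i (1:ℝ))

namespace QOB
variable {d : ℕ}

local notation "Eu" => EuclideanSpace ℝ (Fin d)

lemma inner_gradient (u : Eu → ℝ) (y w : Eu) : ⟪gradient u y, w⟫ = fderiv ℝ u y w := by
  rw [gradient, InnerProductSpace.toDual_symm_apply]

lemma sum_basis_apply (L : Eu →L[ℝ] ℝ) (w : Eu) :
    ∑ i, L (EuclideanSpace.single i (1:ℝ)) * ⟪w, EuclideanSpace.single i (1:ℝ)⟫ = L w := by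
  have hw : ∑ i, w i • EuclideanSpace.single i (1:ℝ) = w := by
    have := (EuclideanSpace.basisFun (Fin d) ℝ).sum_repr w
    simpa [EuclideanSpace.basisFun_apply, EuclideanSpace.basisFun_repr] using this
  calc ∑ i, L (EuclideanSpace.single i (1:ℝ)) * ⟪w, EuclideanSpace.single i (1:ℝ)⟫
      = ∑ i, L (w i • EuclideanSpace.single i (1:ℝ)) := by
        refine Finset.sum_congr rfl fun i _ => ?_
        rw [L.map_smul, smul_eq_mul, EuclideanSpace.inner_single_right]
        simp [mul_comm]
    _ = L w := by rw [← map_sum, hw]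

lemma divg_eq_sum_inner (F : Eu → Eu) (x : Eu) (hF : DifferentiableAt ℝ F x) :
    divg F x = ∑ i, ⟪fderiv ℝ F x (EuclideanSpace.single i (1:ℝ)), EuclideanSpace.single i (1:ℝ)⟫ := by
  unfold divg
  refine Finset.sum_congr rfl fun i _ => ?_
  rw [fderiv_inner_apply ℝ hF (differentiableAt_const _)]
  simp [real_inner_comm]

lemma divg_add (F G : Eu → Eu) (x : Eu) (hF : DifferentiableAt ℝ F x)
    (hG : DifferentiableAt ℝ G x) :
    divg (fun y => F y + G y) x = divg F x + divg G x := by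
  rw [divg_eq_sum_inner (fun y => F y + G y) _ (hF.add hG), divg_eq_sum_inner _ _ hF, divg_eq_sum_inner _ _ hG,
    ← Finset.sum_add_distrib]
  refine Finset.sum_congr rfl fun i _ => ?_
  rw [fderiv_fun_add hF hG]
  simp [inner_add_left]

lemma divg_smul (a : Eu → ℝ) (G : Eu → Eu) (x : Eu) (ha : DifferentiableAt ℝ a x)
    (hG : DifferentiableAt ℝ G x) :
    divg (fun y => a y • G y) x = fderiv ℝ a x (G x) + a x * divg G x := by
  rw [divg_eq_sum_inner (fun y => a y • G y) _ (ha.smul hG), divg_eq_sum_inner _ _ hG]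
  have h : ∀ i : Fin d, ⟪fderiv ℝ (fun y => a y • G y) x (EuclideanSpace.single i (1:ℝ)),
      EuclideanSpace.single i (1:ℝ)⟫
      = fderiv ℝ a x (EuclideanSpace.single i (1:ℝ)) * ⟪G x, EuclideanSpace.single i (1:ℝ)⟫
        + a x * ⟪fderiv ℝ G x (EuclideanSpace.single i (1:ℝ)), EuclideanSpace.single i (1:ℝ)⟫ := by
    intro i
    rw [fderiv_fun_smul ha hG]
    simp [inner_add_left, real_inner_smul_left]
    ring
  simp only [h, Finset.sum_add_distrib, ← Finset.mul_sum, sum_basis_apply]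

lemma divg_gradient (u : Eu → ℝ) (x : Eu) : divg (gradient u) x = lap u x := by
  unfold divg lap
  refine Finset.sum_congr rfl fun i _ => ?_
  have h : (fun y => ⟪gradient u y, EuclideanSpace.single i (1:ℝ)⟫)
      = fun y => fderiv ℝ u y (EuclideanSpace.single i (1:ℝ)) :=
    funext fun y => inner_gradient u y _
  rw [h]

lemma divg_id (x : Eu) : divg (fun y => y) x = (d : ℝ) := by
  rw [divg_eq_sum_inner (fun y => y) _ differentiableAt_fun_id]
  simp [fderiv_fun_id, EuclideanSpace.inner_single_right, EuclideanSpace.single_apply]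

lemma gradient_eq_sum (u : Eu → ℝ) :
    gradient u = fun y => ∑ i, (fderiv ℝ u y (EuclideanSpace.single i (1:ℝ)))
      • EuclideanSpace.single i (1:ℝ) := by
  funext y
  have hw : ∑ i, (gradient u y) i • EuclideanSpace.single i (1:ℝ) = gradient u y := by
    have := (EuclideanSpace.basisFun (Fin d) ℝ).sum_repr (gradient u y)
    simpa [EuclideanSpace.basisFun_apply, EuclideanSpace.basisFun_repr] using this
  rw [← hw]
  refine Finset.sum_congr rfl fun i _ => ?_
  congr 1
  have h := inner_gradient u y (EuclideanSpace.single i (1:ℝ))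
  rw [EuclideanSpace.inner_single_right] at h
  simpa using h

lemma differentiableAt_gradient (u : Eu → ℝ) (x : Eu) (h : ContDiffAt ℝ 2 u x) :
    DifferentiableAt ℝ (gradient u) x := by
  have h1 : DifferentiableAt ℝ (fderiv ℝ u) x :=
    (h.fderiv_right (le_refl 2)).differentiableAt one_ne_zero
  rw [gradient_eq_sum]
  exact DifferentiableAt.fun_sum fun (i : Fin d) _ =>
    (h1.clm_apply (differentiableAt_const _)).smul_const (EuclideanSpace.single i (1:ℝ))

lemma contDiffOn_gradient (u : Eu → ℝ) (U : Set Eu) (hU : IsOpen U)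
    (h : ContDiffOn ℝ 2 u U) : ContDiffOn ℝ 1 (gradient u) U := by
  have h1 : ContDiffOn ℝ 1 (fderiv ℝ u) U := h.fderiv_of_isOpen hU (le_refl 2)
  rw [gradient_eq_sum]
  exact ContDiffOn.sum fun i _ =>
    (h1.clm_apply contDiffOn_const).smul contDiffOn_const

lemma inner_hess (u : Eu → ℝ) (x : Eu) (hx : ContDiffAt ℝ 2 u x) (w b : Eu) :
    ⟪fderiv ℝ (gradient u) x w, b⟫ = fderiv ℝ (fderiv ℝ u) x w b := by
  have hg := differentiableAt_gradient u x hx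
  have h1 : fderiv ℝ (fun y => ⟪gradient u y, b⟫) x w = ⟪fderiv ℝ (gradient u) x w, b⟫ := by
    rw [fderiv_inner_apply ℝ hg (differentiableAt_const _)]
    simp
  have h2 : (fun y => ⟪gradient u y, b⟫) = fun y => fderiv ℝ u y b :=
    funext fun y => inner_gradient u y b
  have hD : DifferentiableAt ℝ (fderiv ℝ u) x :=
    (hx.fderiv_right (le_refl 2)).differentiableAt one_ne_zero
  have h3 : fderiv ℝ (fun y => fderiv ℝ u y b) x w = fderiv ℝ (fderiv ℝ u) x w b := by
    rw [fderiv_clm_apply hD (differentiableAt_const b)]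
    simp
  rw [← h1, h2, h3]

lemma hess_symm (u : Eu → ℝ) (x : Eu) (hx : ContDiffAt ℝ 2 u x) (w b : Eu) :
    ⟪fderiv ℝ (gradient u) x w, b⟫ = ⟪fderiv ℝ (gradient u) x b, w⟫ := by
  rw [inner_hess u x hx, inner_hess u x hx]
  exact hx.isSymmSndFDerivAt (by simp) w b

lemma divg_F1 (u v : Eu → ℝ) (cE : ℝ) (x : Eu)
    (hu2 : ContDiffAt ℝ 2 u x) (hv2 : ContDiffAt ℝ 2 v x) :
    divg (fun y => ⟪y, gradient u y⟫ • gradient v y + ⟪y, gradient v y⟫ • gradient u y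
      + (cE/2 * (u y * v y) - ⟪gradient u y, gradient v y⟫) • y
      + (((d:ℝ)-2)/2 * v y) • gradient u y + (((d:ℝ)-2)/2 * u y) • gradient v y) x
    = cE/2 * ((d:ℝ) * (u x * v x) + v x * ⟪x, gradient u x⟫ + u x * ⟪x, gradient v x⟫)
      + ⟪x, gradient u x⟫ * lap v x + ⟪x, gradient v x⟫ * lap u x
      + ((d:ℝ)-2)/2 * (v x * lap u x + u x * lap v x) := by
  have hud : DifferentiableAt ℝ u x := hu2.differentiableAt two_ne_zero
  have hvd : DifferentiableAt ℝ v x := hv2.differentiableAt two_ne_zero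
  have hgu := differentiableAt_gradient u x hu2
  have hgv := differentiableAt_gradient v x hv2
  have ha1 : DifferentiableAt ℝ (fun y : Eu => ⟪y, gradient u y⟫) x :=
    differentiableAt_fun_id.inner ℝ hgu
  have ha2 : DifferentiableAt ℝ (fun y : Eu => ⟪y, gradient v y⟫) x :=
    differentiableAt_fun_id.inner ℝ hgv
  have ha3 : DifferentiableAt ℝ
      (fun y => cE/2 * (u y * v y) - ⟪gradient u y, gradient v y⟫) x :=
    ((differentiableAt_const _).mul (hud.mul hvd)).sub (hgu.inner ℝ hgv)
  have ha4 : DifferentiableAt ℝ (fun y => ((d:ℝ)-2)/2 * v y) x :=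
    (differentiableAt_const _).mul hvd
  have ha5 : DifferentiableAt ℝ (fun y => ((d:ℝ)-2)/2 * u y) x :=
    (differentiableAt_const _).mul hud
  have hA : DifferentiableAt ℝ (fun y : Eu => ⟪y, gradient u y⟫ • gradient v y) x := ha1.smul hgv
  have hB : DifferentiableAt ℝ (fun y : Eu => ⟪y, gradient v y⟫ • gradient u y) x := ha2.smul hgu
  have hC : DifferentiableAt ℝ
      (fun y => (cE/2 * (u y * v y) - ⟪gradient u y, gradient v y⟫) • y) x :=
    ha3.smul differentiableAt_fun_id
  have hD : DifferentiableAt ℝ (fun y => (((d:ℝ)-2)/2 * v y) • gradient u y) x := ha4.smul hgu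
  have hE : DifferentiableAt ℝ (fun y => (((d:ℝ)-2)/2 * u y) • gradient v y) x := ha5.smul hgv
  erw [divg_add _ _ x (((hA.add hB).add hC).add hD) hE,
      divg_add _ _ x ((hA.add hB).add hC) hD,
      divg_add _ _ x (hA.add hB) hC,
      divg_add _ _ x hA hB,
      divg_smul _ _ x ha1 hgv, divg_smul _ _ x ha2 hgu,
      divg_smul _ _ x ha3 differentiableAt_fun_id,
      divg_smul _ _ x ha4 hgu, divg_smul _ _ x ha5 hgv,
      divg_gradient, divg_gradient, divg_id]
  have hT1 : fderiv ℝ (fun y : Eu => ⟪y, gradient u y⟫) x (gradient v x)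
      = ⟪x, fderiv ℝ (gradient u) x (gradient v x)⟫ + ⟪gradient v x, gradient u x⟫ := by
    rw [fderiv_inner_apply ℝ differentiableAt_fun_id hgu]
    simp
  have hT2 : fderiv ℝ (fun y : Eu => ⟪y, gradient v y⟫) x (gradient u x)
      = ⟪x, fderiv ℝ (gradient v) x (gradient u x)⟫ + ⟪gradient u x, gradient v x⟫ := by
    rw [fderiv_inner_apply ℝ differentiableAt_fun_id hgv]
    simp
  have hT3 : fderiv ℝ (fun y => cE/2 * (u y * v y) - ⟪gradient u y, gradient v y⟫) x x
      = cE/2 * (⟪gradient u x, x⟫ * v x + u x * ⟪gradient v x, x⟫)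
        - (⟪gradient u x, fderiv ℝ (gradient v) x x⟫
          + ⟪fderiv ℝ (gradient u) x x, gradient v x⟫) := by
    rw [fderiv_fun_sub (f := fun y => cE/2 * (u y * v y)) (g := fun y => ⟪gradient u y, gradient v y⟫) ((differentiableAt_const _).mul (hud.mul hvd)) (hgu.inner ℝ hgv)]
    rw [ContinuousLinearMap.sub_apply, fderiv_const_mul (a := fun y => u y * v y) (hud.mul hvd), fderiv_fun_mul hud hvd,
      fderiv_inner_apply ℝ hgu hgv]
    simp only [ContinuousLinearMap.smul_apply, ContinuousLinearMap.add_apply, smul_eq_mul]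
    rw [← inner_gradient u x x, ← inner_gradient v x x]
    ring
  have hT4 : fderiv ℝ (fun y => ((d:ℝ)-2)/2 * v y) x (gradient u x)
      = ((d:ℝ)-2)/2 * ⟪gradient v x, gradient u x⟫ := by
    rw [fderiv_const_mul hvd]
    simp only [ContinuousLinearMap.smul_apply, smul_eq_mul]
    rw [← inner_gradient v x]
  have hT5 : fderiv ℝ (fun y => ((d:ℝ)-2)/2 * u y) x (gradient v x)
      = ((d:ℝ)-2)/2 * ⟪gradient u x, gradient v x⟫ := by
    rw [fderiv_const_mul hud]
    simp only [ContinuousLinearMap.smul_apply, smul_eq_mul]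
    rw [← inner_gradient u x]
  rw [hT1, hT2, hT3, hT4, hT5]
  have hs1 : ⟪x, fderiv ℝ (gradient u) x (gradient v x)⟫
      = ⟪fderiv ℝ (gradient u) x x, gradient v x⟫ :=
    calc ⟪x, fderiv ℝ (gradient u) x (gradient v x)⟫
        = ⟪fderiv ℝ (gradient u) x (gradient v x), x⟫ := real_inner_comm _ _
      _ = ⟪fderiv ℝ (gradient u) x x, gradient v x⟫ := hess_symm u x hu2 _ _
  have hs2 : ⟪x, fderiv ℝ (gradient v) x (gradient u x)⟫
      = ⟪gradient u x, fderiv ℝ (gradient v) x x⟫ :=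
    calc ⟪x, fderiv ℝ (gradient v) x (gradient u x)⟫
        = ⟪fderiv ℝ (gradient v) x (gradient u x), x⟫ := real_inner_comm _ _
      _ = ⟪fderiv ℝ (gradient v) x x, gradient u x⟫ := hess_symm v x hv2 _ _
      _ = ⟪gradient u x, fderiv ℝ (gradient v) x x⟫ := real_inner_comm _ _
  rw [hs1, hs2, real_inner_comm (gradient v x) (gradient u x),
    real_inner_comm (gradient u x) x, real_inner_comm (gradient v x) x]
  ring

lemma divg_F2 (u v : Eu → ℝ) (x : Eu)
    (hu2 : ContDiffAt ℝ 2 u x) (hv2 : ContDiffAt ℝ 2 v x) :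
    divg (fun y => ((1:ℝ)/2 * ⟪y, y⟫ * v y) • gradient u y
      + (-((1:ℝ)/2 * ⟪y, y⟫ * u y)) • gradient v y) x
    = v x * ⟪x, gradient u x⟫ - u x * ⟪x, gradient v x⟫
      + (1:ℝ)/2 * ⟪x, x⟫ * (v x * lap u x - u x * lap v x) := by
  have hud : DifferentiableAt ℝ u x := hu2.differentiableAt two_ne_zero
  have hvd : DifferentiableAt ℝ v x := hv2.differentiableAt two_ne_zero
  have hgu := differentiableAt_gradient u x hu2
  have hgv := differentiableAt_gradient v x hv2
  have hid : DifferentiableAt ℝ (fun y : Eu => y) x := differentiableAt_fun_id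
  have hq : DifferentiableAt ℝ (fun y : Eu => ⟪y, y⟫) x := hid.inner ℝ hid
  have hn : DifferentiableAt ℝ (fun y : Eu => (1:ℝ)/2 * ⟪y, y⟫) x :=
    (differentiableAt_const _).mul hq
  have hb1 : DifferentiableAt ℝ (fun y : Eu => (1:ℝ)/2 * ⟪y, y⟫ * v y) x := hn.mul hvd
  have hb2 : DifferentiableAt ℝ (fun y : Eu => -((1:ℝ)/2 * ⟪y, y⟫ * u y)) x := (hn.mul hud).neg
  erw [divg_add _ _ x (hb1.smul hgu) (hb2.smul hgv),
      divg_smul _ _ x hb1 hgu, divg_smul _ _ x hb2 hgv,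
      divg_gradient, divg_gradient]
  have hqf : ∀ w : Eu, fderiv ℝ (fun y : Eu => ⟪y, y⟫) x w = 2 * ⟪x, w⟫ := by
    intro w
    rw [fderiv_inner_apply ℝ hid hid]
    simp only [fderiv_fun_id, ContinuousLinearMap.coe_id', id_eq]
    rw [real_inner_comm w x]
    ring
  have hb1f : fderiv ℝ (fun y : Eu => (1:ℝ)/2 * ⟪y, y⟫ * v y) x (gradient u x)
      = ⟪x, gradient u x⟫ * v x + (1:ℝ)/2 * ⟪x, x⟫ * ⟪gradient v x, gradient u x⟫ := by
    rw [fderiv_fun_mul hn hvd]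
    simp only [ContinuousLinearMap.add_apply, ContinuousLinearMap.smul_apply, smul_eq_mul]
    rw [fderiv_const_mul hq]
    simp only [ContinuousLinearMap.smul_apply, smul_eq_mul]
    rw [hqf, ← inner_gradient v x]
    ring
  have hb2f : fderiv ℝ (fun y : Eu => -((1:ℝ)/2 * ⟪y, y⟫ * u y)) x (gradient v x)
      = -(⟪x, gradient v x⟫ * u x + (1:ℝ)/2 * ⟪x, x⟫ * ⟪gradient u x, gradient v x⟫) := by
    rw [fderiv_fun_neg]
    simp only [ContinuousLinearMap.neg_apply]
    rw [fderiv_fun_mul hn hud]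
    simp only [ContinuousLinearMap.add_apply, ContinuousLinearMap.smul_apply, smul_eq_mul]
    rw [fderiv_const_mul hq]
    simp only [ContinuousLinearMap.smul_apply, smul_eq_mul]
    rw [hqf, ← inner_gradient u x]
    ring
  rw [hb1f, hb2f, real_inner_comm (gradient v x) (gradient u x)]
  ring

end QOB

/-- The boundary bilinear form `q(u, v; 𝓔)`. -/
def qform (d : ℕ) (Ω : Set (EuclideanSpace ℝ (Fin d)))
    (n : EuclideanSpace ℝ (Fin d) → EuclideanSpace ℝ (Fin d))
    (u v : EuclideanSpace ℝ (Fin d) → ℝ) (cE : ℝ) : ℝ :=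
  ∫ x in frontier Ω,
    (((d : ℝ) - 2) / 2 * (⟪n x, gradient u x⟫ * v x + ⟪n x, gradient v x⟫ * u x)
      + ⟪x, n x⟫ * (cE / 2 * u x * v x - ⟪gradient u x, gradient v x⟫)
      + ⟪x, gradient u x⟫ * ⟪n x, gradient v x⟫
      + ⟪x, gradient v x⟫ * ⟪n x, gradient u x⟫) ∂(μH[(d:ℝ) - 1])

set_option maxHeartbeats 2000000 in
open QOB in
theorem quasi_orthogonality_bound
    (d : ℕ) (hd : 2 ≤ d) (Ω : Set (EuclideanSpace ℝ (Fin d)))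
    (hΩo : IsOpen Ω) (hΩb : Bornology.IsBounded Ω)
    (n : EuclideanSpace ℝ (Fin d) → EuclideanSpace ℝ (Fin d))
    (R : ℝ) (hR : 0 < R) (hΩR : Ω ⊆ Metric.closedBall 0 R)
    (hGG : ∀ F : EuclideanSpace ℝ (Fin d) → EuclideanSpace ℝ (Fin d),
      (∃ U, IsOpen U ∧ closure Ω ⊆ U ∧ ContDiffOn ℝ 1 F U) →
      (∫ x in Ω, divg F x) = ∫ x in frontier Ω, ⟪F x, n x⟫ ∂(μH[(d:ℝ) - 1]))
    (φ ψ : EuclideanSpace ℝ (Fin d) → ℝ) (Eφ Eψ : ℝ)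
    (hφr : ∃ U, IsOpen U ∧ closure Ω ⊆ U ∧ ContDiffOn ℝ 2 φ U) (hψr : ∃ U, IsOpen U ∧ closure Ω ⊆ U ∧ ContDiffOn ℝ 2 ψ U)
    (hHφ : ∀ x ∈ Ω, -lap φ x = Eφ * φ x) (hHψ : ∀ x ∈ Ω, -lap ψ x = Eψ * ψ x)
    (hφnorm : (∫ x in Ω, (φ x) ^ 2) = 1)
    (hψnorm : (∫ x in Ω, (ψ x) ^ 2) = 1)
    (horth : (∫ x in Ω, φ x * ψ x) = 0)
    (hbc : ∃ ΓD ⊆ frontier Ω, ∃ γ : EuclideanSpace ℝ (Fin d) → ℝ,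
      (∀ x ∈ ΓD, φ x = 0 ∧ ψ x = 0) ∧
      ∀ x ∈ frontier Ω \ ΓD,
        γ x * φ x + ⟪n x, gradient φ x⟫ = 0 ∧
        γ x * ψ x + ⟪n x, gradient ψ x⟫ = 0)
    :
    |qform d Ω n φ ψ (Eφ + Eψ)| ≤ R ^ 2 / 4 * (Eφ - Eψ) ^ 2 := by
  classical
  obtain ⟨U₁, hU₁o, hU₁s, hφU⟩ := hφr
  obtain ⟨U₂, hU₂o, hU₂s, hψU⟩ := hψr
  obtain ⟨ΓD, hΓD, γ, hDir, hRob⟩ := hbc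
  set U : Set (EuclideanSpace ℝ (Fin d)) := U₁ ∩ U₂ with hUdef
  have hUo : IsOpen U := hU₁o.inter hU₂o
  have hUs : closure Ω ⊆ U := Set.subset_inter hU₁s hU₂s
  have hφ2 : ContDiffOn ℝ 2 φ U := hφU.mono Set.inter_subset_left
  have hψ2 : ContDiffOn ℝ 2 ψ U := hψU.mono Set.inter_subset_right
  have hφat : ∀ x ∈ U, ContDiffAt ℝ 2 φ x := fun x hx => (hφ2 x hx).contDiffAt (hUo.mem_nhds hx)
  have hψat : ∀ x ∈ U, ContDiffAt ℝ 2 ψ x := fun x hx => (hψ2 x hx).contDiffAt (hUo.mem_nhds hx)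
  have hΩU : ∀ x ∈ Ω, x ∈ U := fun x hx => hUs (subset_closure hx)
  -- the two vector fields
  set cE : ℝ := Eφ + Eψ with hcE
  set F₁ : EuclideanSpace ℝ (Fin d) → EuclideanSpace ℝ (Fin d) := fun y =>
    ⟪y, gradient φ y⟫ • gradient ψ y + ⟪y, gradient ψ y⟫ • gradient φ y
      + (cE/2 * (φ y * ψ y) - ⟪gradient φ y, gradient ψ y⟫) • y
      + (((d:ℝ)-2)/2 * ψ y) • gradient φ y + (((d:ℝ)-2)/2 * φ y) • gradient ψ y with hF₁def
  set F₂ : EuclideanSpace ℝ (Fin d) → EuclideanSpace ℝ (Fin d) := fun y =>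
    ((1:ℝ)/2 * ⟪y, y⟫ * ψ y) • gradient φ y
      + (-((1:ℝ)/2 * ⟪y, y⟫ * φ y)) • gradient ψ y with hF₂def
  -- smoothness of the fields
  have hgφ : ContDiffOn ℝ 1 (gradient φ) U := contDiffOn_gradient φ U hUo hφ2
  have hgψ : ContDiffOn ℝ 1 (gradient ψ) U := contDiffOn_gradient ψ U hUo hψ2
  have hφ1 : ContDiffOn ℝ 1 φ U := hφ2.of_le one_le_two
  have hψ1 : ContDiffOn ℝ 1 ψ U := hψ2.of_le one_le_two
  have hidc : ContDiffOn ℝ 1 (fun y : EuclideanSpace ℝ (Fin d) => y) U := contDiffOn_id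
  have hF₁s : ContDiffOn ℝ 1 F₁ U := by
    rw [hF₁def]
    exact (((((hidc.inner ℝ hgφ).smul hgψ).add ((hidc.inner ℝ hgψ).smul hgφ)).add
      (((contDiffOn_const.mul (hφ1.mul hψ1)).sub (hgφ.inner ℝ hgψ)).smul hidc)).add
      ((contDiffOn_const.mul hψ1).smul hgφ)).add ((contDiffOn_const.mul hφ1).smul hgψ)
  have hF₂s : ContDiffOn ℝ 1 F₂ U := by
    rw [hF₂def]
    exact (((contDiffOn_const.mul (hidc.inner ℝ hidc)).mul hψ1).smul hgφ).add
      ((((contDiffOn_const.mul (hidc.inner ℝ hidc)).mul hφ1).neg).smul hgψ)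
  -- Gauss-Green for both fields
  have hGG₁ := hGG F₁ ⟨U, hUo, hUs, hF₁s⟩
  have hGG₂ := hGG F₂ ⟨U, hUo, hUs, hF₂s⟩
  -- boundary integrand of F₁ is the qform integrand
  have hqb : qform d Ω n φ ψ (Eφ + Eψ) = ∫ x in frontier Ω, ⟪F₁ x, n x⟫ ∂(μH[(d:ℝ) - 1]) := by
    unfold qform
    refine setIntegral_congr_fun isClosed_frontier.measurableSet fun x _ => ?_
    rw [hF₁def]
    simp only [inner_add_left, real_inner_smul_left]
    rw [real_inner_comm (gradient φ x) (n x), real_inner_comm (gradient ψ x) (n x)]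
    ring
  -- boundary integrand of F₂ vanishes
  have hzb : (∫ x in frontier Ω, ⟪F₂ x, n x⟫ ∂(μH[(d:ℝ) - 1])) = 0 := by
    rw [show (∫ x in frontier Ω, ⟪F₂ x, n x⟫ ∂(μH[(d:ℝ) - 1]))
        = ∫ x in frontier Ω, (0:ℝ) ∂(μH[(d:ℝ) - 1]) from
      setIntegral_congr_fun isClosed_frontier.measurableSet fun x hx => ?_]
    · exact integral_zero _ _
    rw [hF₂def]
    simp only [inner_add_left, real_inner_smul_left]
    rw [real_inner_comm (n x) (gradient φ x), real_inner_comm (n x) (gradient ψ x)]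
    by_cases hxD : x ∈ ΓD
    · obtain ⟨h1, h2⟩ := hDir x hxD
      rw [h1, h2]; ring
    · obtain ⟨h1, h2⟩ := hRob x ⟨hx, hxD⟩
      have e1 : ⟪n x, gradient φ x⟫ = -(γ x * φ x) := by linarith
      have e2 : ⟪n x, gradient ψ x⟫ = -(γ x * ψ x) := by linarith
      rw [e1, e2]; ring
  -- integrability infrastructure
  have hK : IsCompact (closure Ω) := hΩb.isCompact_closure
  have hΩm : MeasurableSet Ω := hΩo.measurableSet
  have hint : ∀ f : EuclideanSpace ℝ (Fin d) → ℝ, ContinuousOn f U → IntegrableOn f Ω := by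
    intro f hf
    exact ((hf.mono hUs).integrableOn_compact hK).mono_set subset_closure
  have hcφ : ContinuousOn φ U := hφ2.continuousOn
  have hcψ : ContinuousOn ψ U := hψ2.continuousOn
  have hcgφ : ContinuousOn (gradient φ) U := hgφ.continuousOn
  have hcgψ : ContinuousOn (gradient ψ) U := hgψ.continuousOn
  have hcid : ContinuousOn (fun y : EuclideanSpace ℝ (Fin d) => y) U := continuousOn_id
  -- the two scalar quantities
  set g : EuclideanSpace ℝ (Fin d) → ℝ :=
    fun x => ψ x * ⟪x, gradient φ x⟫ - φ x * ⟪x, gradient ψ x⟫ with hgdef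
  set h : EuclideanSpace ℝ (Fin d) → ℝ := fun x => ⟪x, x⟫ * (φ x * ψ x) with hhdef
  have hintg : IntegrableOn g Ω := by
    refine hint g ?_
    rw [hgdef]
    exact (hcψ.mul (hcid.inner hcgφ)).sub (hcφ.mul (hcid.inner hcgψ))
  have hinth : IntegrableOn h Ω := by
    refine hint h ?_
    rw [hhdef]
    exact (hcid.inner hcid).mul (hcφ.mul hcψ)
  have hintφψ : IntegrableOn (fun x => φ x * ψ x) Ω := hint _ (hcφ.mul hcψ)
  have hintφ2 : IntegrableOn (fun x => (φ x) ^ 2) Ω := hint _ (hcφ.pow 2)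
  have hintψ2 : IntegrableOn (fun x => (ψ x) ^ 2) Ω := hint _ (hcψ.pow 2)
  -- pointwise divergence identities on Ω
  have hdiv1 : ∀ x ∈ Ω, divg F₁ x = cE * (φ x * ψ x) + (Eφ - Eψ)/2 * g x := by
    intro x hx
    have hxU := hΩU x hx
    have hlφ : lap φ x = -(Eφ * φ x) := by have := hHφ x hx; linarith
    have hlψ : lap ψ x = -(Eψ * ψ x) := by have := hHψ x hx; linarith
    rw [hF₁def]
    rw [divg_F1 φ ψ cE x (hφat x hxU) (hψat x hxU), hlφ, hlψ, hgdef, hcE]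
    ring
  have hdiv2 : ∀ x ∈ Ω, divg F₂ x = g x + (Eψ - Eφ)/2 * h x := by
    intro x hx
    have hxU := hΩU x hx
    have hlφ : lap φ x = -(Eφ * φ x) := by have := hHφ x hx; linarith
    have hlψ : lap ψ x = -(Eψ * ψ x) := by have := hHψ x hx; linarith
    rw [hF₂def]
    rw [divg_F2 φ ψ x (hφat x hxU) (hψat x hxU), hlφ, hlψ, hgdef, hhdef]
    ring
  -- compute the interior integrals
  have hI1 : (∫ x in Ω, divg F₁ x) = (Eφ - Eψ)/2 * ∫ x in Ω, g x := by
    rw [setIntegral_congr_fun hΩm hdiv1, integral_add (hintφψ.const_mul cE)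
      (hintg.const_mul _), integral_const_mul, integral_const_mul, horth]
    ring
  have hI2 : (∫ x in Ω, divg F₂ x) = (∫ x in Ω, g x) + (Eψ - Eφ)/2 * ∫ x in Ω, h x := by
    rw [setIntegral_congr_fun hΩm hdiv2, integral_add hintg (hinth.const_mul _),
      integral_const_mul]
  -- combine
  have hA : (∫ x in Ω, g x) = (Eφ - Eψ)/2 * ∫ x in Ω, h x := by
    have := hGG₂
    rw [hI2, hzb] at this
    linarith
  have hq : qform d Ω n φ ψ (Eφ + Eψ) = (Eφ - Eψ)^2/4 * ∫ x in Ω, h x := by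
    rw [hqb, ← hGG₁, hI1, hA]
    ring
  -- bound on the moment integral
  have hB : |∫ x in Ω, h x| ≤ R ^ 2 := by
    have step1 : |∫ x in Ω, h x| ≤ ∫ x in Ω, |h x| := by
      rw [← Real.norm_eq_abs]
      exact (norm_integral_le_integral_norm _).trans (le_of_eq (by simp [Real.norm_eq_abs]))
    have step2 : (∫ x in Ω, |h x|) ≤ ∫ x in Ω, R ^ 2 / 2 * ((φ x) ^ 2 + (ψ x) ^ 2) := by
      refine setIntegral_mono_on hinth.abs ((hintφ2.add hintψ2).const_mul _) hΩm ?_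
      intro x hx
      have hxR : ‖x‖ ≤ R := by
        have := hΩR hx
        rwa [Metric.mem_closedBall, dist_zero_right] at this
      have hxx : ⟪x, x⟫ = ‖x‖ ^ 2 := real_inner_self_eq_norm_sq x
      have hxx2 : (0:ℝ) ≤ ⟪x, x⟫ := real_inner_self_nonneg
      have hxxR : ⟪x, x⟫ ≤ R ^ 2 := by
        rw [hxx]; exact pow_le_pow_left₀ (norm_nonneg x) hxR 2
      rw [hhdef]
      have habs : |⟪x, x⟫ * (φ x * ψ x)| = ⟪x, x⟫ * |φ x * ψ x| := by
        rw [abs_mul, abs_of_nonneg hxx2]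
      rw [habs]
      have h1 : |φ x * ψ x| ≤ ((φ x) ^ 2 + (ψ x) ^ 2) / 2 := by
        rw [abs_mul]
        nlinarith [sq_nonneg (|φ x| - |ψ x|), sq_abs (φ x), sq_abs (ψ x),
          abs_nonneg (φ x), abs_nonneg (ψ x)]
      nlinarith [abs_nonneg (φ x * ψ x), sq_nonneg (φ x), sq_nonneg (ψ x)]
    have step3 : (∫ x in Ω, R ^ 2 / 2 * ((φ x) ^ 2 + (ψ x) ^ 2)) = R ^ 2 := by
      rw [integral_const_mul, integral_add hintφ2 hintψ2, hφnorm, hψnorm]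
      ring
    calc |∫ x in Ω, h x| ≤ ∫ x in Ω, |h x| := step1
      _ ≤ ∫ x in Ω, R ^ 2 / 2 * ((φ x) ^ 2 + (ψ x) ^ 2) := step2
      _ = R ^ 2 := step3
  rw [hq, abs_mul, abs_of_nonneg (by positivity : (0:ℝ) ≤ (Eφ - Eψ)^2/4)]
  calc (Eφ - Eψ)^2/4 * |∫ x in Ω, h x| ≤ (Eφ - Eψ)^2/4 * R ^ 2 :=
        mul_le_mul_of_nonneg_left hB (by positivity)
    _ = R ^ 2 / 4 * (Eφ - Eψ) ^ 2 := by ring
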